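/- For all n ≥ 2, the number of partitions of n with odd parts distinct, even parts unrestricted, and all odd parts greater than all even parts, is strictly less than the number of partitions of n with even parts distinct, odd parts unrestricted, and all even parts greater than all odd parts. -/
import Mathlib

/-- Every odd part is greater than every even part. -/
def oddAbove (l : Multiset ℕ) : Prop :=
  ∀ a ∈ l, ∀ b ∈ l, Odd a → Even b → b < a

/-- Every even part is greater than every odd part. -/
def evenAbove (l : Multiset ℕ) : Prop :=
  ∀ a ∈ l, ∀ b ∈ l, Even a → Odd b → b < a

/-- The odd parts are distinct. -/
def oddDistinct (l : Multiset ℕ) : Prop :=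
  ∀ a, Odd a → l.count a ≤ 1

/-- The even parts are distinct. -/
def evenDistinct (l : Multiset ℕ) : Prop :=
  ∀ a, Even a → l.count a ≤ 1

/-- The number of partitions of `n` whose multiset of parts satisfies `P`. -/
noncomputable def pcount (n : ℕ) (P : Multiset ℕ → Prop) : ℕ :=
  Nat.card {p : Nat.Partition n // P p.parts}

open Multiset

/-- The injection on multisets: decrement every part (dropping zeros) and add
`card l` new parts equal to `1`. -/
def phiM (l : Multiset ℕ) : Multiset ℕ :=
  ((l.map (· - 1)).filter (0 < ·)) + Multiset.replicate (Multiset.card l) 1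

lemma sum_filter_pos (s : Multiset ℕ) : (s.filter (0 < ·)).sum = s.sum := by
  induction s using Multiset.induction with
  | empty => simp
  | cons a s ih =>
    by_cases h : 0 < a
    · simp [Multiset.filter_cons_of_pos, h, ih]
    · have : a = 0 := by omega
      simp [Multiset.filter_cons_of_neg, h, ih, this]

lemma sum_map_pred (l : Multiset ℕ) (h : ∀ x ∈ l, 0 < x) :
    (l.map (· - 1)).sum + Multiset.card l = l.sum := by
  induction l using Multiset.induction with
  | empty => simp
  | cons a s ih =>
    have ha : 0 < a := h a (mem_cons_self _ _)
    have := ih (fun x hx => h x (mem_cons_of_mem hx))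
    simp only [map_cons, sum_cons, card_cons]
    omega

lemma phiM_sum (l : Multiset ℕ) (h : ∀ x ∈ l, 0 < x) : (phiM l).sum = l.sum := by
  simp only [phiM, sum_add, sum_filter_pos, sum_replicate, smul_eq_mul, mul_one]
  exact sum_map_pred l h

lemma phiM_pos (l : Multiset ℕ) : ∀ x ∈ phiM l, 0 < x := by
  intro x hx
  rcases mem_add.mp hx with hx | hx
  · exact (mem_filter.mp hx).2
  · simp [eq_of_mem_replicate hx]

lemma count_map_sub_one (l : Multiset ℕ) {a : ℕ} (ha : 0 < a) :
    (l.map (· - 1)).count a = l.count (a + 1) := by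
  induction l using Multiset.induction with
  | empty => simp
  | cons x s ih =>
    simp only [map_cons, count_cons, ih]
    split_ifs <;> omega

lemma count_one_phiM (l : Multiset ℕ) :
    (phiM l).count 1 = l.count 2 + Multiset.card l := by
  simp only [phiM, count_add, count_filter, count_replicate]
  rw [count_map_sub_one l (by norm_num : (0:ℕ) < 1)]
  norm_num

lemma count_phiM_of_two_le (l : Multiset ℕ) {a : ℕ} (ha : 2 ≤ a) :
    (phiM l).count a = l.count (a + 1) := by
  simp only [phiM, count_add, count_filter, count_replicate]
  rw [count_map_sub_one l (by omega : 0 < a)]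
  have h1 : 0 < a := by omega
  simp only [if_pos h1]
  rw [if_neg (show ¬(1 = a) by omega)]
  omega

lemma filter_two_phiM (l : Multiset ℕ) :
    (phiM l).filter (2 ≤ ·) = (l.filter (3 ≤ ·)).map (· - 1) := by
  simp only [phiM, filter_add]
  have h1 : (Multiset.replicate (Multiset.card l) 1).filter (2 ≤ ·) = 0 := by
    rw [Multiset.filter_eq_nil]
    intro a ha
    simp [eq_of_mem_replicate ha]
  rw [h1, add_zero, Multiset.filter_filter]
  have h2 : ((l.map (· - 1)).filter fun a => 2 ≤ a ∧ 0 < a) =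
      (l.map (· - 1)).filter (2 ≤ ·) := by
    apply Multiset.filter_congr
    intro x _
    constructor
    · exact fun h => h.1
    · exact fun h => ⟨h, by omega⟩
  rw [h2]
  clear h1 h2
  induction l using Multiset.induction with
  | empty => simp
  | cons x s ih =>
    by_cases h : 3 ≤ x
    · rw [map_cons, Multiset.filter_cons_of_pos _ (show (2:ℕ) ≤ x - 1 by omega),
        Multiset.filter_cons_of_pos _ h, map_cons, ih]
    · rw [map_cons, Multiset.filter_cons_of_neg _ (show ¬((2:ℕ) ≤ x - 1) by omega),
        Multiset.filter_cons_of_neg _ h, ih]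

lemma decomp (l : Multiset ℕ) (h : ∀ x ∈ l, 0 < x) :
    l = l.filter (3 ≤ ·) +
      (Multiset.replicate (l.count 2) 2 + Multiset.replicate (l.count 1) 1) := by
  have h0 : l.count 0 = 0 := Multiset.count_eq_zero.mpr (fun hm => by simpa using h 0 hm)
  ext a
  simp only [count_add, count_filter, count_replicate]
  rcases a with _ | _ | _ | a
  · norm_num
    exact fun hm => by simpa using h 0 hm
  · norm_num
  · norm_num
  · norm_num

lemma phiM_inj {l₁ l₂ : Multiset ℕ} (h₁ : ∀ x ∈ l₁, 0 < x) (h₂ : ∀ x ∈ l₂, 0 < x)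
    (d₁ : l₁.count 1 ≤ 1) (d₂ : l₂.count 1 ≤ 1) (he : phiM l₁ = phiM l₂) :
    l₁ = l₂ := by
  have hf : l₁.filter (3 ≤ ·) = l₂.filter (3 ≤ ·) := by
    have := congrArg (fun s : Multiset ℕ => (s.filter (2 ≤ ·)).map (· + 1)) he
    simp only [filter_two_phiM, Multiset.map_map] at this
    have e1 : ∀ (l : Multiset ℕ), ((l.filter (3 ≤ ·)).map ((· + 1) ∘ (· - 1))) =
        l.filter (3 ≤ ·) := by
      intro l
      have : ∀ x ∈ l.filter (3 ≤ ·), ((· + 1) ∘ (· - 1)) x = x := by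
        intro x hx
        have := (mem_filter.mp hx).2
        simp only [Function.comp_apply]
        omega
      rw [Multiset.map_congr rfl this, Multiset.map_id']
    rwa [e1, e1] at this
  have hcard : Multiset.card (l₁.filter (3 ≤ ·)) = Multiset.card (l₂.filter (3 ≤ ·)) := by
    rw [hf]
  have hc1 : (phiM l₁).count 1 = (phiM l₂).count 1 := by rw [he]
  rw [count_one_phiM, count_one_phiM] at hc1
  have e1 := congrArg Multiset.card (decomp l₁ h₁)
  have e2 := congrArg Multiset.card (decomp l₂ h₂)
  simp only [Multiset.card_add, Multiset.card_replicate] at e1 e2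
  have hcc : l₁.count 2 = l₂.count 2 ∧ l₁.count 1 = l₂.count 1 := by omega
  calc l₁ = l₁.filter (3 ≤ ·) +
      (Multiset.replicate (l₁.count 2) 2 + Multiset.replicate (l₁.count 1) 1) := decomp l₁ h₁
    _ = l₂.filter (3 ≤ ·) +
      (Multiset.replicate (l₂.count 2) 2 + Multiset.replicate (l₂.count 1) 1) := by
        rw [hf, hcc.1, hcc.2]
    _ = l₂ := (decomp l₂ h₂).symm

lemma phiM_B (l : Multiset ℕ) (hpos : ∀ x ∈ l, 0 < x)
    (hd : oddDistinct l) (ha : oddAbove l) :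
    evenDistinct (phiM l) ∧ evenAbove (phiM l) := by
  constructor
  · intro a hea
    rcases Nat.eq_zero_or_pos a with rfl | h0
    · have hz : (phiM l).count 0 = 0 :=
        Multiset.count_eq_zero.mpr (fun hm => by simpa using phiM_pos l 0 hm)
      omega
    · have h2 : 2 ≤ a := by rcases hea with ⟨k, hk⟩; omega
      rw [count_phiM_of_two_le l h2]
      exact hd (a + 1) (Even.add_one hea)
  · intro a hma b hmb hea hob
    -- analyze a
    rcases mem_add.mp hma with h | h
    · obtain ⟨hmap, hapos⟩ := mem_filter.mp h
      obtain ⟨x, hx, hxe⟩ := Multiset.mem_map.mp hmap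
      have hxa : x = a + 1 := by omega
      have hxodd : Odd x := hxa ▸ Even.add_one hea
      have ha2 : 2 ≤ a := by rcases hea with ⟨k, hk⟩; omega
      rcases mem_add.mp hmb with h' | h'
      · obtain ⟨hmap', hbpos⟩ := mem_filter.mp h'
        obtain ⟨y, hy, hye⟩ := Multiset.mem_map.mp hmap'
        have hyb : y = b + 1 := by omega
        have hyeven : Even y := hyb ▸ Odd.add_one hob
        have := ha x hx y hy hxodd hyeven
        omega
      · have hb1 : b = 1 := eq_of_mem_replicate h'
        omega
    · have : a = 1 := eq_of_mem_replicate h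
      subst this
      exact absurd hea (by simp)

lemma singleton_B (n : ℕ) :
    evenDistinct ({n} : Multiset ℕ) ∧ evenAbove ({n} : Multiset ℕ) := by
  constructor
  · intro a _
    rw [Multiset.count_singleton]
    split_ifs <;> omega
  · intro a hma b hmb hea hob
    rw [Multiset.mem_singleton] at hma hmb
    subst hma; subst hmb
    simp [Nat.even_iff, Nat.odd_iff] at hea hob
    omega

theorem stmt4 (n : ℕ) (hn : 2 ≤ n) :
    pcount n (fun l => oddDistinct l ∧ oddAbove l) <
      pcount n (fun l => evenDistinct l ∧ evenAbove l) := by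
  classical
  let Φ : {p : Nat.Partition n // oddDistinct p.parts ∧ oddAbove p.parts} →
      {p : Nat.Partition n // evenDistinct p.parts ∧ evenAbove p.parts} :=
    fun p => ⟨⟨phiM p.1.parts, @fun i hi => phiM_pos _ i hi,
      by rw [phiM_sum _ (fun x hx => p.1.parts_pos hx)]; exact p.1.parts_sum⟩,
      phiM_B _ (fun x hx => p.1.parts_pos hx) p.2.1 p.2.2⟩
  have hinj : Function.Injective Φ := by
    intro p q h
    have hp : phiM p.1.parts = phiM q.1.parts := congrArg (fun r => r.1.parts) h
    have hparts : p.1.parts = q.1.parts :=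
      phiM_inj (fun x hx => p.1.parts_pos hx) (fun x hx => q.1.parts_pos hx)
        (p.2.1 1 odd_one) (q.2.1 1 odd_one) hp
    exact Subtype.ext (Nat.Partition.ext hparts)
  let w : Nat.Partition n :=
    ⟨{n}, @fun i hi => by rw [Multiset.mem_singleton] at hi; omega, by simp⟩
  have hnot : (⟨w, singleton_B n⟩ :
      {p : Nat.Partition n // evenDistinct p.parts ∧ evenAbove p.parts}) ∉ Set.range Φ := by
    rintro ⟨p, hp⟩
    have hparts : phiM p.1.parts = ({n} : Multiset ℕ) := congrArg (fun r => r.1.parts) hp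
    have h1 : (phiM p.1.parts).count 1 = 0 := by
      rw [hparts, Multiset.count_singleton, if_neg (by omega)]
    rw [count_one_phiM] at h1
    have hne : p.1.parts ≠ 0 := by
      intro h0
      have := p.1.parts_sum
      rw [h0] at this
      simp at this
      omega
    have := Multiset.card_pos.mpr hne
    omega
  unfold pcount
  rw [Nat.card_eq_fintype_card, Nat.card_eq_fintype_card]
  exact Fintype.card_lt_of_injective_of_notMem Φ hinj hnot
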